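/- Let C > 1 and 1 ≤ q < ∞. Then there is a constant c > 0 depending only on C and q such that if ℓ_q^n is C-isomorphic to a linear subspace of ℓ_∞^m for some m ≥ 2, then n ≤ c·log m. -/

import Mathlib

open scoped ENNReal

open Finset Real

def sg (b : Bool) : ℝ := if b then 1 else -1

lemma abs_sg (b : Bool) : |sg b| = 1 := by cases b <;> simp [sg]

lemma sum_prod_exchange {n : ℕ} (g : Fin n → Bool → ℝ) :
    ∑ ε : Fin n → Bool, ∏ j, g j (ε j) = ∏ j, (g j true + g j false) := by
  rw [← Fintype.piFinset_univ, Finset.sum_prod_piFinset]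
  refine Finset.prod_congr rfl (fun j _ => ?_)
  rw [Fintype.sum_bool]

lemma mgf_bound {n : ℕ} (b : Fin n → ℝ) (t : ℝ) :
    ∑ ε : Fin n → Bool, Real.exp (∑ j, t * (b j * sg (ε j))) ≤
      2 ^ n * Real.exp (t ^ 2 * (∑ j, b j ^ 2) / 2) := by
  calc ∑ ε : Fin n → Bool, Real.exp (∑ j, t * (b j * sg (ε j)))
      = ∑ ε : Fin n → Bool, ∏ j, Real.exp (t * (b j * sg (ε j))) :=
        Finset.sum_congr rfl (fun ε _ => Real.exp_sum _ _)
    _ = ∏ j, (Real.exp (t * (b j * sg true)) + Real.exp (t * (b j * sg false))) :=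
        sum_prod_exchange (fun j x => Real.exp (t * (b j * sg x)))
    _ ≤ ∏ j, 2 * Real.exp ((t * b j) ^ 2 / 2) := by
        refine Finset.prod_le_prod (fun j _ => by positivity) (fun j _ => ?_)
        have h0 : t * (b j * sg true) = t * b j := by simp [sg]
        have h0' : t * (b j * sg false) = -(t * b j) := by simp [sg]
        rw [h0, h0']
        have h2 := Real.cosh_le_exp_half_sq (t * b j)
        rw [Real.cosh_eq] at h2
        linarith
    _ = 2 ^ n * Real.exp (t ^ 2 * (∑ j, b j ^ 2) / 2) := by
        rw [Finset.prod_mul_distrib, Finset.prod_const, ← Real.exp_sum]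
        simp only [Finset.card_univ, Fintype.card_fin]
        congr 1
        have h3 : (∑ j, (t * b j) ^ 2) = t ^ 2 * ∑ j, b j ^ 2 := by
          rw [Finset.mul_sum]
          exact Finset.sum_congr rfl (fun j _ => by ring)
        rw [← Finset.sum_div, h3]

lemma chernoff_count {n : ℕ} (b : Fin n → ℝ) (s V : ℝ) (hs : 0 < s) (hV : 0 < V)
    (hbV : ∑ j, b j ^ 2 ≤ V) :
    ((Finset.univ.filter fun ε : Fin n → Bool => s ≤ ∑ j, sg (ε j) * b j).card : ℝ) ≤
      2 ^ n * Real.exp (-(s ^ 2) / (2 * V)) := by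
  set t := s / V with ht
  have ht0 : 0 < t := div_pos hs hV
  set F := (Finset.univ.filter fun ε : Fin n → Bool => s ≤ ∑ j, sg (ε j) * b j) with hF
  have key : (F.card : ℝ) * Real.exp (t * s) ≤ 2 ^ n * Real.exp (t ^ 2 * V / 2) := by
    calc (F.card : ℝ) * Real.exp (t * s) = ∑ _ε ∈ F, Real.exp (t * s) := by
          rw [Finset.sum_const, nsmul_eq_mul]
      _ ≤ ∑ ε ∈ F, Real.exp (∑ j, t * (b j * sg (ε j))) := by
          refine Finset.sum_le_sum fun ε hε => ?_
          have h1 : s ≤ ∑ j, sg (ε j) * b j := (Finset.mem_filter.mp hε).2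
          refine Real.exp_le_exp.mpr ?_
          calc t * s ≤ t * ∑ j, sg (ε j) * b j := mul_le_mul_of_nonneg_left h1 ht0.le
            _ = ∑ j, t * (b j * sg (ε j)) := by
                rw [Finset.mul_sum]
                exact Finset.sum_congr rfl fun j _ => by ring
      _ ≤ ∑ ε : Fin n → Bool, Real.exp (∑ j, t * (b j * sg (ε j))) :=
          Finset.sum_le_sum_of_subset_of_nonneg (Finset.subset_univ _)
            (fun _ _ _ => (Real.exp_pos _).le)
      _ ≤ 2 ^ n * Real.exp (t ^ 2 * (∑ j, b j ^ 2) / 2) := mgf_bound b t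
      _ ≤ 2 ^ n * Real.exp (t ^ 2 * V / 2) := by
          have : t ^ 2 * (∑ j, b j ^ 2) / 2 ≤ t ^ 2 * V / 2 := by
            have := sq_nonneg t; nlinarith
          have h2 : (0:ℝ) ≤ 2 ^ n := by positivity
          exact mul_le_mul_of_nonneg_left (Real.exp_le_exp.mpr this) h2
  have h4 : (F.card : ℝ) ≤ 2 ^ n * Real.exp (t ^ 2 * V / 2) / Real.exp (t * s) := by
    rw [le_div_iff₀ (Real.exp_pos _)]; exact key
  calc (F.card : ℝ) ≤ 2 ^ n * Real.exp (t ^ 2 * V / 2) / Real.exp (t * s) := h4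
    _ = 2 ^ n * Real.exp (t ^ 2 * V / 2 - t * s) := by rw [Real.exp_sub]; ring
    _ = 2 ^ n * Real.exp (-(s ^ 2) / (2 * V)) := by
        congr 2
        rw [ht]
        field_simp
        ring

lemma chernoff_count_abs {n : ℕ} (b : Fin n → ℝ) (s V : ℝ) (hs : 0 < s) (hV : 0 < V)
    (hbV : ∑ j, b j ^ 2 ≤ V) :
    ((Finset.univ.filter fun ε : Fin n → Bool => s ≤ |∑ j, sg (ε j) * b j|).card : ℝ) ≤
      2 * 2 ^ n * Real.exp (-(s ^ 2) / (2 * V)) := by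
  set F1 := (Finset.univ.filter fun ε : Fin n → Bool => s ≤ ∑ j, sg (ε j) * b j)
  set F2 := (Finset.univ.filter fun ε : Fin n → Bool => s ≤ ∑ j, sg (ε j) * (-b j))
  have hsub : (Finset.univ.filter fun ε : Fin n → Bool => s ≤ |∑ j, sg (ε j) * b j|)
      ⊆ F1 ∪ F2 := by
    intro ε hε
    have h1 : s ≤ |∑ j, sg (ε j) * b j| := (Finset.mem_filter.mp hε).2
    rcases le_abs.mp h1 with h | h
    · exact Finset.mem_union_left _ (Finset.mem_filter.mpr ⟨Finset.mem_univ _, h⟩)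
    · refine Finset.mem_union_right _ (Finset.mem_filter.mpr ⟨Finset.mem_univ _, ?_⟩)
      have : ∑ j, sg (ε j) * (-b j) = -∑ j, sg (ε j) * b j := by
        rw [← Finset.sum_neg_distrib]
        exact Finset.sum_congr rfl fun j _ => by ring
      rw [this]; exact h
  have hb2 : ∑ j, (-b j) ^ 2 ≤ V := by
    have : ∀ j, (-b j) ^ 2 = b j ^ 2 := fun j => by ring
    simpa [this] using hbV
  have hc1 := chernoff_count b s V hs hV hbV
  have hc2 := chernoff_count (fun j => -b j) s V hs hV hb2
  have := Finset.card_le_card hsub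
  have hcu := Finset.card_union_le F1 F2
  have : ((Finset.univ.filter fun ε : Fin n → Bool => s ≤ |∑ j, sg (ε j) * b j|).card : ℝ)
      ≤ (F1.card : ℝ) + (F2.card : ℝ) := by
    exact_mod_cast le_trans (Nat.cast_le.mpr this) (by exact_mod_cast Nat.cast_le.mpr hcu)
  calc ((Finset.univ.filter fun ε : Fin n → Bool => s ≤ |∑ j, sg (ε j) * b j|).card : ℝ)
      ≤ (F1.card : ℝ) + (F2.card : ℝ) := this
    _ ≤ 2 ^ n * Real.exp (-(s ^ 2) / (2 * V)) + 2 ^ n * Real.exp (-(s ^ 2) / (2 * V)) :=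
        add_le_add hc1 hc2
    _ = 2 * 2 ^ n * Real.exp (-(s ^ 2) / (2 * V)) := by ring

lemma sign_mul_self' (x : ℝ) : Real.sign x * x = |x| := by
  rcases lt_trichotomy x 0 with h | h | h
  · rw [Real.sign_of_neg h, abs_of_neg h]; ring
  · simp [h]
  · rw [Real.sign_of_pos h, abs_of_pos h]; ring

lemma abs_sign_le_one (x : ℝ) : |Real.sign x| ≤ 1 := by
  rcases Real.sign_apply_eq x with h | h | h <;> rw [h] <;> norm_num

lemma trunc_count {n : ℕ} (hn : 1 ≤ n) {C p : ℝ} (hC : 1 < C) (hp : 1 ≤ p)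
    (a : Fin n → ℝ)
    (ha : ∀ v : Fin n → ℝ, (∀ j, |v j| ≤ 1) →
      |∑ j, v j * a j| ≤ C * ((Finset.univ.filter fun j => v j ≠ 0).card : ℝ) ^ (1/p)) :
    ((Finset.univ.filter fun ε : Fin n → Bool =>
        (n:ℝ) ^ (1/p) ≤ |∑ j, sg (ε j) * a j|).card : ℝ) ≤
      2 * 2 ^ n * Real.exp (-(n : ℝ) / (8 * C * (2*C) ^ p)) := by
  have hC0 : (0:ℝ) < C := by linarith
  have h2C0 : (0:ℝ) < 2*C := by linarith
  have hp0 : (0:ℝ) < p := by linarith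
  have hn0 : (0:ℝ) < (n:ℝ) := by exact_mod_cast hn
  set lam : ℝ := (2*C)^p * (n:ℝ)^((1-p)/p) with hlam_def
  have hlam : 0 < lam := by
    apply mul_pos (Real.rpow_pos_of_pos h2C0 _) (Real.rpow_pos_of_pos hn0 _)
  set B : Finset (Fin n) := Finset.univ.filter (fun j => lam ≤ |a j|) with hB_def
  -- Step A
  have hBsum : ∑ j ∈ B, |a j| ≤ C * (B.card : ℝ) ^ (1/p) := by
    set v : Fin n → ℝ := fun j => if lam ≤ |a j| then Real.sign (a j) else 0 with hv_def
    have hv1 : ∀ j, |v j| ≤ 1 := by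
      intro j; rw [hv_def]; dsimp only
      split
      · exact abs_sign_le_one _
      · norm_num
    have hsum_eq : ∑ j, v j * a j = ∑ j ∈ B, |a j| := by
      rw [hB_def, Finset.sum_filter]
      refine Finset.sum_congr rfl fun j _ => ?_
      rw [hv_def]; dsimp only
      split
      · rw [sign_mul_self']
      · ring
    have hsupp : (Finset.univ.filter fun j => v j ≠ 0) ⊆ B := by
      intro j hj
      have h1 : v j ≠ 0 := (Finset.mem_filter.mp hj).2
      rw [hB_def, Finset.mem_filter]
      refine ⟨Finset.mem_univ _, ?_⟩
      by_contra h2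
      apply h1
      rw [hv_def]; dsimp only
      rw [if_neg h2]
    have := ha v hv1
    rw [hsum_eq] at this
    have h3 := le_abs_self (∑ j ∈ B, |a j|)
    refine h3.trans (this.trans ?_)
    have h4 : ((Finset.univ.filter fun j => v j ≠ 0).card : ℝ) ≤ (B.card : ℝ) :=
      Nat.cast_le.mpr (Finset.card_le_card hsupp)
    exact mul_le_mul_of_nonneg_left
      (Real.rpow_le_rpow (Nat.cast_nonneg _) h4 (by positivity)) hC0.le
  -- Step B
  have hBcard : (B.card : ℝ) ≤ (n:ℝ) / (2*C)^p := by
    by_contra h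
    push_neg at h
    set x : ℝ := (B.card : ℝ) with hx_def
    have hx0 : (0:ℝ) < x := lt_of_le_of_lt (by positivity) h
    have hxsplit : x = x ^ ((p-1)/p) * x ^ (1/p) := by
      rw [← Real.rpow_add hx0]
      rw [show (p-1)/p + 1/p = 1 by field_simp; ring]
      rw [Real.rpow_one]
    have hexp_nonneg : (0:ℝ) ≤ (p-1)/p := div_nonneg (by linarith) hp0.le
    have hmono : ((n:ℝ)/(2*C)^p) ^ ((p-1)/p) ≤ x ^ ((p-1)/p) :=
      Real.rpow_le_rpow (by positivity) h.le hexp_nonneg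
    have hdiv : ((n:ℝ)/(2*C)^p) ^ ((p-1)/p) = (n:ℝ)^((p-1)/p) / (2*C)^(p-1) := by
      rw [Real.div_rpow hn0.le (by positivity)]
      congr 1
      rw [← Real.rpow_mul h2C0.le]
      congr 1
      field_simp
    have e1 : (n:ℝ)^((1-p)/p) * (n:ℝ)^((p-1)/p) = 1 := by
      rw [← Real.rpow_add hn0, show (1-p)/p + (p-1)/p = 0 by ring, Real.rpow_zero]
    have e2 : (2*C)^p = (2*C) * (2*C)^(p-1) := by
      rw [Real.rpow_sub h2C0, Real.rpow_one]
      field_simp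
    have step1 : (2*C)^p * (n:ℝ)^((1-p)/p) * ((n:ℝ)^((p-1)/p) / (2*C)^(p-1)) = 2*C := by
      have hr : (2*C)^p * (n:ℝ)^((1-p)/p) * ((n:ℝ)^((p-1)/p) / (2*C)^(p-1))
          = ((2*C)^p / (2*C)^(p-1)) * ((n:ℝ)^((1-p)/p) * (n:ℝ)^((p-1)/p)) := by ring
      rw [hr, e1, ← Real.rpow_sub h2C0, show p - (p-1) = 1 by ring, Real.rpow_one, mul_one]
    have hxp' : (0:ℝ) ≤ x^(1/p) := (Real.rpow_pos_of_pos hx0 _).le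
    have key1 : 2*C * x^(1/p) ≤ lam * x := by
      calc 2*C * x^(1/p)
          = (2*C)^p * (n:ℝ)^((1-p)/p) * ((n:ℝ)^((p-1)/p) / (2*C)^(p-1)) * x^(1/p) := by
            rw [step1]
        _ ≤ (2*C)^p * (n:ℝ)^((1-p)/p) * (x ^ ((p-1)/p)) * x^(1/p) := by
            rw [← hdiv]
            exact mul_le_mul_of_nonneg_right (mul_le_mul_of_nonneg_left hmono hlam.le) hxp'
        _ = lam * (x ^ ((p-1)/p) * x ^ (1/p)) := by rw [hlam_def]; ring
        _ = lam * x := by rw [← hxsplit]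
    have hlow : lam * x ≤ ∑ j ∈ B, |a j| := by
      have := Finset.card_nsmul_le_sum B (fun j => |a j|) lam
        (fun j hj => (Finset.mem_filter.mp hj).2)
      rw [nsmul_eq_mul] at this
      calc lam * x = x * lam := by ring
        _ ≤ ∑ j ∈ B, |a j| := this
    have hxp : (0:ℝ) < x^(1/p) := Real.rpow_pos_of_pos hx0 _
    nlinarith [hBsum]
  -- Step C
  have hBsum2 : ∑ j ∈ B, |a j| ≤ (n:ℝ)^(1/p) / 2 := by
    have h1 : (B.card : ℝ) ^ (1/p) ≤ ((n:ℝ)/(2*C)^p) ^ (1/p) :=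
      Real.rpow_le_rpow (Nat.cast_nonneg _) hBcard (by positivity)
    have h2 : ((n:ℝ)/(2*C)^p) ^ (1/p) = (n:ℝ)^(1/p) / (2*C) := by
      rw [Real.div_rpow hn0.le (by positivity)]
      congr 1
      rw [← Real.rpow_mul h2C0.le]
      rw [mul_one_div_cancel hp0.ne', Real.rpow_one]
    refine hBsum.trans ?_
    rw [h2] at h1
    calc C * (B.card : ℝ) ^ (1/p) ≤ C * ((n:ℝ)^(1/p) / (2*C)) :=
          mul_le_mul_of_nonneg_left h1 hC0.le
      _ = (n:ℝ)^(1/p) / 2 := by field_simp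
  -- Step D
  set b : Fin n → ℝ := fun j => if lam ≤ |a j| then 0 else a j with hb_def
  have hT : ∑ j, (if lam ≤ |a j| then 0 else |a j|) ≤ C * (n:ℝ)^(1/p) := by
    set v : Fin n → ℝ := fun j => if lam ≤ |a j| then 0 else Real.sign (a j) with hv_def
    have hv1 : ∀ j, |v j| ≤ 1 := by
      intro j; rw [hv_def]; dsimp only
      split
      · norm_num
      · exact abs_sign_le_one _
    have hsum_eq : ∑ j, v j * a j = ∑ j, (if lam ≤ |a j| then 0 else |a j|) := by
      refine Finset.sum_congr rfl fun j _ => ?_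
      rw [hv_def]; dsimp only
      split
      · ring
      · rw [sign_mul_self']
    have h1 := ha v hv1
    rw [hsum_eq] at h1
    have h2 := le_abs_self (∑ j, (if lam ≤ |a j| then 0 else |a j|))
    refine h2.trans (h1.trans ?_)
    have h3 : ((Finset.univ.filter (fun j => v j ≠ 0)).card : ℝ) ≤ (n:ℝ) := by
      have h4 := Finset.card_filter_le (Finset.univ : Finset (Fin n)) (fun j => v j ≠ 0)
      have h5 : (Finset.univ : Finset (Fin n)).card = n := by simp
      rw [h5] at h4
      exact_mod_cast h4
    exact mul_le_mul_of_nonneg_left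
      (Real.rpow_le_rpow (Nat.cast_nonneg _) h3 (by positivity)) hC0.le
  set V : ℝ := lam * (C * (n:ℝ)^(1/p)) with hV_def
  have hV0 : 0 < V := mul_pos hlam (mul_pos hC0 (Real.rpow_pos_of_pos hn0 _))
  have hbV : ∑ j, b j ^ 2 ≤ V := by
    have h1 : ∀ j, b j^2 ≤ lam * (if lam ≤ |a j| then 0 else |a j|) := by
      intro j; rw [hb_def]; dsimp only
      split
      · simp
      · next h =>
        push_neg at h
        have h6 : (a j)^2 = |a j| * |a j| := by rw [← sq_abs]; ring
        rw [h6]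
        exact mul_le_mul_of_nonneg_right h.le (abs_nonneg _)
    calc ∑ j, b j^2 ≤ ∑ j, lam * (if lam ≤ |a j| then 0 else |a j|) :=
          Finset.sum_le_sum (fun j _ => h1 j)
      _ = lam * ∑ j, (if lam ≤ |a j| then 0 else |a j|) := by rw [Finset.mul_sum]
      _ ≤ lam * (C * (n:ℝ)^(1/p)) := mul_le_mul_of_nonneg_left hT hlam.le
  -- Step E
  set s : ℝ := (n:ℝ)^(1/p)/2 with hs_def
  have hs0 : 0 < s := by
    rw [hs_def]
    have := Real.rpow_pos_of_pos hn0 (1/p)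
    linarith
  have hsubset : (Finset.univ.filter fun ε : Fin n → Bool =>
        (n:ℝ) ^ (1/p) ≤ |∑ j, sg (ε j) * a j|)
      ⊆ (Finset.univ.filter fun ε : Fin n → Bool => s ≤ |∑ j, sg (ε j) * b j|) := by
    intro ε hε
    have h1 : (n:ℝ)^(1/p) ≤ |∑ j, sg (ε j) * a j| := (Finset.mem_filter.mp hε).2
    refine Finset.mem_filter.mpr ⟨Finset.mem_univ _, ?_⟩
    have hdecomp : ∑ j, sg (ε j) * a j
        = ∑ j, sg (ε j) * b j + ∑ j, sg (ε j) * (if lam ≤ |a j| then a j else 0) := by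
      rw [← Finset.sum_add_distrib]
      refine Finset.sum_congr rfl fun j _ => ?_
      rw [hb_def]; dsimp only
      split <;> ring
    have hbig : |∑ j, sg (ε j) * (if lam ≤ |a j| then a j else 0)| ≤ (n:ℝ)^(1/p)/2 := by
      refine (Finset.abs_sum_le_sum_abs _ _).trans ?_
      have heq : ∀ j, |sg (ε j) * (if lam ≤ |a j| then a j else 0)|
          = (if lam ≤ |a j| then |a j| else 0) := by
        intro j; rw [abs_mul, abs_sg, one_mul]
        split <;> simp
      calc ∑ j, |sg (ε j) * (if lam ≤ |a j| then a j else 0)|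
          = ∑ j, (if lam ≤ |a j| then |a j| else 0) :=
            Finset.sum_congr rfl (fun j _ => heq j)
        _ = ∑ j ∈ B, |a j| := by rw [hB_def, Finset.sum_filter]
        _ ≤ (n:ℝ)^(1/p)/2 := hBsum2
    have hsmall_eq : ∑ j, sg (ε j) * b j
        = (∑ j, sg (ε j) * a j) - ∑ j, sg (ε j) * (if lam ≤ |a j| then a j else 0) := by
      rw [hdecomp]; ring
    have habs := abs_sub_abs_le_abs_sub (∑ j, sg (ε j) * a j)
      (∑ j, sg (ε j) * (if lam ≤ |a j| then a j else 0))
    rw [← hsmall_eq] at habs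
    rw [hs_def]
    linarith
  -- Step F
  have hcount := chernoff_count_abs b s V hs0 hV0 hbV
  have hcard : ((Finset.univ.filter fun ε : Fin n → Bool =>
        (n:ℝ) ^ (1/p) ≤ |∑ j, sg (ε j) * a j|).card : ℝ)
      ≤ ((Finset.univ.filter fun ε : Fin n → Bool => s ≤ |∑ j, sg (ε j) * b j|).card : ℝ) :=
    Nat.cast_le.mpr (Finset.card_le_card hsubset)
  have hexp_eq : -(s^2)/(2*V) = -(n:ℝ)/(8*C*(2*C)^p) := by
    have hw : (n:ℝ)^(1/p) = (n:ℝ) * (n:ℝ)^((1-p)/p) := by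
      conv_lhs => rw [show (1:ℝ)/p = 1 + (1-p)/p by field_simp; ring]
      rw [Real.rpow_add hn0, Real.rpow_one]
    rw [hs_def, hV_def, hlam_def, hw]
    have hww : (0:ℝ) < (n:ℝ)^((1-p)/p) := Real.rpow_pos_of_pos hn0 _
    have hz : (0:ℝ) < (2*C)^p := Real.rpow_pos_of_pos h2C0 _
    field_simp
    ring
  rw [hexp_eq] at hcount
  exact hcard.trans hcount

theorem lq_embed_linfty_dim_bound (C : ℝ) (hC : 1 < C) (q : ℝ≥0∞) [Fact (1 ≤ q)]
    (hq : q ≠ ⊤) :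
    ∃ c : ℝ, 0 < c ∧ ∀ n m : ℕ, 2 ≤ m →
      (∃ Φ : PiLp q (fun _ : Fin n => ℝ) →ₗ[ℝ] PiLp ⊤ (fun _ : Fin m => ℝ),
        ∀ v, ‖v‖ ≤ ‖Φ v‖ ∧ ‖Φ v‖ ≤ C * ‖v‖) →
      (n : ℝ) ≤ c * Real.log m := by
  have hC0 : (0:ℝ) < C := by linarith
  have h2C0 : (0:ℝ) < 2*C := by linarith
  have hq1 : (1:ℝ≥0∞) ≤ q := Fact.out
  set p : ℝ := q.toReal with hp_def
  have hp : 1 ≤ p := by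
    have h1 := ENNReal.toReal_mono hq hq1
    simpa using h1
  have hp0 : (0:ℝ) < p := by linarith
  have hKpos : (0:ℝ) < 8*C*(2*C)^p := by
    have := Real.rpow_pos_of_pos h2C0 p
    positivity
  refine ⟨16*C*(2*C)^p, by positivity, ?_⟩
  rintro n m hm ⟨Φ, hΦ⟩
  have hm0 : (0:ℝ) < (m:ℝ) := by exact_mod_cast Nat.lt_of_lt_of_le (by norm_num) hm
  have hm2 : (2:ℝ) ≤ (m:ℝ) := by exact_mod_cast hm
  have hlog2 : Real.log 2 ≤ Real.log m := Real.log_le_log (by norm_num) hm2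
  have hlogm : 0 ≤ Real.log m := Real.log_nonneg (by linarith)
  rcases Nat.eq_zero_or_pos n with hn | hn
  · subst hn
    simp only [Nat.cast_zero]
    positivity
  -- setup functionals
  set φ : Fin m → ((Fin n → ℝ) →ₗ[ℝ] ℝ) := fun i =>
    (LinearMap.proj i).comp
      (((WithLp.linearEquiv ⊤ ℝ (Fin m → ℝ)).toLinearMap.comp Φ).comp
        (WithLp.linearEquiv q ℝ (Fin n → ℝ)).symm.toLinearMap) with hφ_def
  set a : Fin m → Fin n → ℝ := fun i j => φ i (fun k => if j = k then 1 else 0) with ha_def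
  have happ : ∀ i (v : Fin n → ℝ), φ i v = ∑ j, v j * a i j := by
    intro i v
    rw [LinearMap.pi_apply_eq_sum_univ (φ i) v]
    exact Finset.sum_congr rfl fun j _ => rfl
  have hφΦ : ∀ i (v : Fin n → ℝ),
      φ i v = (Φ ((WithLp.linearEquiv q ℝ (Fin n → ℝ)).symm v)) i := fun i v => rfl
  -- norms
  have hnormq : ∀ v : Fin n → ℝ,
      ‖(WithLp.linearEquiv q ℝ (Fin n → ℝ)).symm v‖ = (∑ j, |v j| ^ p) ^ (1/p) := by
    intro v
    have h0 : 0 < q.toReal := hp0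
    have hsum : (∑ j, ‖((WithLp.linearEquiv q ℝ (Fin n → ℝ)).symm v) j‖ ^ q.toReal)
        = ∑ j, |v j| ^ p :=
      Finset.sum_congr rfl fun j _ => by rw [Real.norm_eq_abs]; rfl
    rw [PiLp.norm_eq_sum h0, hsum]
  have hcoord : ∀ (y : PiLp ⊤ (fun _ : Fin m => ℝ)) (i : Fin m), |y i| ≤ ‖y‖ := by
    intro y i
    rw [PiLp.norm_eq_ciSup]
    have h1 : ‖y i‖ ≤ ⨆ k, ‖y k‖ := le_ciSup (f := fun k => ‖y k‖) (Set.Finite.bddAbove (Set.finite_range _)) i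
    simpa [Real.norm_eq_abs] using h1
  -- upper bound hypothesis for trunc_count
  have hupper : ∀ i, ∀ v : Fin n → ℝ, (∀ j, |v j| ≤ 1) →
      |∑ j, v j * a i j| ≤ C * ((Finset.univ.filter fun j => v j ≠ 0).card : ℝ) ^ (1/p) := by
    intro i v hv
    rw [← happ i v, hφΦ i v]
    set x := (WithLp.linearEquiv q ℝ (Fin n → ℝ)).symm v with hx_def
    have h1 : |(Φ x) i| ≤ ‖Φ x‖ := hcoord _ i
    have h2 : ‖Φ x‖ ≤ C * ‖x‖ := (hΦ x).2
    have h3 : ‖x‖ ≤ ((Finset.univ.filter fun j => v j ≠ 0).card : ℝ) ^ (1/p) := by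
      rw [hx_def, hnormq v]
      refine Real.rpow_le_rpow (by positivity) ?_ (by positivity)
      have h4 : ∀ j : Fin n, |v j| ^ p ≤ (if v j ≠ 0 then (1:ℝ) else 0) := by
        intro j
        by_cases hj : v j = 0
        · simp [hj, Real.zero_rpow hp0.ne']
        · rw [if_pos hj]
          exact Real.rpow_le_one (abs_nonneg _) (hv j) hp0.le
      calc ∑ j, |v j| ^ p ≤ ∑ j, (if v j ≠ 0 then (1:ℝ) else 0) :=
            Finset.sum_le_sum fun j _ => h4 j
        _ = ((Finset.univ.filter fun j => v j ≠ 0).card : ℝ) := by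
            rw [Finset.sum_boole]
    calc |(Φ x) i| ≤ C * ‖x‖ := h1.trans h2
      _ ≤ C * ((Finset.univ.filter fun j => v j ≠ 0).card : ℝ) ^ (1/p) :=
          mul_le_mul_of_nonneg_left h3 hC0.le
  -- lower bound: each sign vector is captured by some coordinate
  have hlower : ∀ ε : Fin n → Bool, ∃ i, (n:ℝ) ^ (1/p) ≤ |∑ j, sg (ε j) * a i j| := by
    intro ε
    set w : Fin n → ℝ := fun j => sg (ε j) with hw_def
    set x := (WithLp.linearEquiv q ℝ (Fin n → ℝ)).symm w with hx_def
    have hxnorm : ‖x‖ = (n:ℝ) ^ (1/p) := by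
      rw [hx_def, hnormq w]
      congr 1
      have : ∀ j : Fin n, |w j| ^ p = 1 := by
        intro j
        rw [hw_def]
        simp only
        rw [abs_sg, Real.one_rpow]
      rw [Finset.sum_congr rfl fun j _ => this j]
      simp
    have h1 : (n:ℝ) ^ (1/p) ≤ ‖Φ x‖ := by
      rw [← hxnorm]; exact (hΦ x).1
    have hne : Nonempty (Fin m) := ⟨⟨0, by omega⟩⟩
    obtain ⟨i, hi⟩ := Finite.exists_max (fun i => ‖(Φ x) i‖)
    have h2 : ‖Φ x‖ ≤ ‖(Φ x) i‖ := by
      rw [PiLp.norm_eq_ciSup]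
      exact ciSup_le hi
    refine ⟨i, ?_⟩
    have h3 : ∑ j, sg (ε j) * a i j = (Φ x) i := by
      rw [← happ i w, hφΦ i w]
    rw [h3]
    calc (n:ℝ) ^ (1/p) ≤ ‖Φ x‖ := h1
      _ ≤ ‖(Φ x) i‖ := h2
      _ = |(Φ x) i| := Real.norm_eq_abs _
  -- counting
  set K : ℝ := 8*C*(2*C)^p with hK_def
  set E : ℝ := Real.exp (-(n:ℝ)/K) with hE_def
  have hcount : ∀ i : Fin m, ((Finset.univ.filter fun ε : Fin n → Bool =>
      (n:ℝ) ^ (1/p) ≤ |∑ j, sg (ε j) * a i j|).card : ℝ) ≤ 2 * 2^n * E :=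
    fun i => trunc_count hn hC hp (a i) (hupper i)
  have hcover : (Finset.univ : Finset (Fin n → Bool)) ⊆
      Finset.univ.biUnion (fun i : Fin m => Finset.univ.filter fun ε : Fin n → Bool =>
        (n:ℝ) ^ (1/p) ≤ |∑ j, sg (ε j) * a i j|) := by
    intro ε _
    obtain ⟨i, hi⟩ := hlower ε
    exact Finset.mem_biUnion.mpr ⟨i, Finset.mem_univ _,
      Finset.mem_filter.mpr ⟨Finset.mem_univ _, hi⟩⟩
  have hcards : ((2:ℝ))^n ≤ (m:ℝ) * (2 * 2^n * E) := by
    have h1 : (Finset.univ : Finset (Fin n → Bool)).card ≤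
        ∑ i : Fin m, (Finset.univ.filter fun ε : Fin n → Bool =>
          (n:ℝ) ^ (1/p) ≤ |∑ j, sg (ε j) * a i j|).card :=
      le_trans (Finset.card_le_card hcover) (Finset.card_biUnion_le)
    have h2 : (Finset.univ : Finset (Fin n → Bool)).card = 2^n := by
      simp [Finset.card_univ]
    rw [h2] at h1
    have h3 : ((2:ℝ))^n ≤ ∑ i : Fin m, ((Finset.univ.filter fun ε : Fin n → Bool =>
        (n:ℝ) ^ (1/p) ≤ |∑ j, sg (ε j) * a i j|).card : ℝ) := by
      exact_mod_cast h1
    refine h3.trans ?_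
    calc ∑ i : Fin m, ((Finset.univ.filter fun ε : Fin n → Bool =>
          (n:ℝ) ^ (1/p) ≤ |∑ j, sg (ε j) * a i j|).card : ℝ)
        ≤ ∑ _i : Fin m, 2 * 2^n * E := Finset.sum_le_sum fun i _ => hcount i
      _ = (m:ℝ) * (2 * 2^n * E) := by
          rw [Finset.sum_const, Finset.card_univ, Fintype.card_fin, nsmul_eq_mul]
  -- conclude
  have hEpos : 0 < E := Real.exp_pos _
  have h2npos : (0:ℝ) < 2^n := by positivity
  have h5 : (1:ℝ) ≤ 2*m*E := by
    have h6 : (1:ℝ) * 2^n ≤ (2*m*E) * 2^n := by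
      calc (1:ℝ) * 2^n = 2^n := by ring
        _ ≤ (m:ℝ) * (2 * 2^n * E) := hcards
        _ = (2*m*E) * 2^n := by ring
    exact le_of_mul_le_mul_right (by linarith) h2npos
  have hexp : Real.exp ((n:ℝ)/K) ≤ 2*m := by
    have h7 : Real.exp ((n:ℝ)/K) * 1 ≤ Real.exp ((n:ℝ)/K) * (2*m*E) :=
      mul_le_mul_of_nonneg_left h5 (Real.exp_pos _).le
    calc Real.exp ((n:ℝ)/K) = Real.exp ((n:ℝ)/K) * 1 := by ring
      _ ≤ Real.exp ((n:ℝ)/K) * (2*m*E) := h7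
      _ = 2*m*(Real.exp ((n:ℝ)/K) * Real.exp (-(n:ℝ)/K)) := by rw [hE_def]; ring
      _ = 2*m := by
          rw [← Real.exp_add, show (n:ℝ)/K + -(n:ℝ)/K = 0 by ring, Real.exp_zero, mul_one]
  have h8 : (n:ℝ)/K ≤ Real.log (2*m) :=
    (Real.le_log_iff_exp_le (by positivity)).mpr hexp
  have h9 : Real.log (2*(m:ℝ)) = Real.log 2 + Real.log m :=
    Real.log_mul (by norm_num) hm0.ne'
  have h10 : (n:ℝ)/K ≤ 2 * Real.log m := by
    rw [h9] at h8
    linarith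
  have h11 : (n:ℝ) ≤ K * (2 * Real.log m) := by
    rw [div_le_iff₀ hKpos] at h10
    calc (n:ℝ) ≤ 2 * Real.log m * K := h10
      _ = K * (2 * Real.log m) := by ring
  calc (n:ℝ) ≤ K * (2 * Real.log m) := h11
    _ = 16*C*(2*C)^p * Real.log m := by rw [hK_def]; ring
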